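/- Let 𝒮 and 𝒜 be finite sets of sizes S and A with A ≥ 2, let H ≥ 1 be an integer, and let Δ : 𝒮×𝒜×[H] → [0,H] be any function taking at least one positive value. Define Δ_min = min{Δ_h(x,a) : Δ_h(x,a) > 0}, A_{h,0}^opt(x) = {a ∈ 𝒜 : Δ_h(x,a) = 0}, and A_mul = {(x,a,h) : Δ_h(x,a) = 0 and |A_{h,0}^opt(x)| > 1}. Then Σ_{(x,a,h) : Δ_h(x,a) > 0} 1/Δ_h(x,a) + |A_mul|/Δ_min ≥ SA/2. -/

import Mathlib

open scoped BigOperators Classical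

noncomputable section

/-- Let `𝒮 = Fin S` and `𝒜 = Fin A` with `A ≥ 2`, `H ≥ 1`, and let
`Δ : [H] × 𝒮 × 𝒜 → [0,H]` take at least one positive value.  With
`Δ_min = min{Δ_h(x,a) : Δ_h(x,a) > 0}`, `A_{h,0}^opt(x) = {a : Δ_h(x,a) = 0}` and
`A_mul = {(x,a,h) : Δ_h(x,a) = 0 ∧ |A_{h,0}^opt(x)| > 1}`, we have
`∑_{(x,a,h) : Δ_h(x,a) > 0} 1/Δ_h(x,a) + |A_mul|/Δ_min ≥ SA/2`. -/
theorem gap_sum_plus_mul_ge (S A H : ℕ) (hA : 2 ≤ A) (hH : 1 ≤ H)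
    (Δ : ℕ → Fin S → Fin A → ℝ)
    (hΔ : ∀ h x a, Δ h x a ∈ Set.Icc (0 : ℝ) H)
    (hpos : ∃ x a, ∃ h ∈ Finset.Icc 1 H, 0 < Δ h x a) :
    let T3 : Finset (Fin S × Fin A × ℕ) :=
      Finset.univ ×ˢ Finset.univ ×ˢ Finset.Icc 1 H
    let Δmin : ℝ := sInf {g : ℝ | 0 < g ∧ ∃ x a, ∃ h ∈ Finset.Icc 1 H, Δ h x a = g}
    let Aopt : ℕ → Fin S → Finset (Fin A) :=
      fun h x => Finset.univ.filter fun a => Δ h x a = 0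
    let Amul : Finset (Fin S × Fin A × ℕ) :=
      T3.filter fun t => Δ t.2.2 t.1 t.2.1 = 0 ∧ 1 < (Aopt t.2.2 t.1).card
    (S : ℝ) * A / 2 ≤
      (∑ t ∈ T3.filter (fun t => 0 < Δ t.2.2 t.1 t.2.1), 1 / Δ t.2.2 t.1 t.2.1)
        + (Amul.card : ℝ) / Δmin := by
  intro T3 Δmin Aopt Amul
  classical
  have hH0 : (0 : ℝ) < H := by exact_mod_cast hH
  -- Properties of Δmin
  have hsetfin : ({g : ℝ | 0 < g ∧ ∃ x a, ∃ h ∈ Finset.Icc 1 H, Δ h x a = g}).Finite := by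
    apply Set.Finite.subset (Set.finite_range
      (fun t : (Finset.Icc 1 H) × Fin S × Fin A => Δ t.1 t.2.1 t.2.2))
    rintro g ⟨-, x, a, h, hh, rfl⟩
    exact ⟨⟨⟨h, hh⟩, x, a⟩, rfl⟩
  have hne : ({g : ℝ | 0 < g ∧ ∃ x a, ∃ h ∈ Finset.Icc 1 H, Δ h x a = g}).Nonempty := by
    obtain ⟨x, a, h, hh, hg⟩ := hpos
    exact ⟨Δ h x a, hg, x, a, h, hh, rfl⟩
  have hmem : Δmin ∈ {g : ℝ | 0 < g ∧ ∃ x a, ∃ h ∈ Finset.Icc 1 H, Δ h x a = g} :=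
    hne.csInf_mem hsetfin
  obtain ⟨hΔmin_pos, x₀, a₀, h₀, hh₀, hΔeq⟩ := hmem
  have hΔmin_leH : Δmin ≤ H := hΔeq ▸ (hΔ h₀ x₀ a₀).2
  -- counting
  set P := T3.filter (fun t => 0 < Δ t.2.2 t.1 t.2.1) with hPdef
  set C := T3.filter (fun t => ¬ 0 < Δ t.2.2 t.1 t.2.1 ∧ ¬ (1 < (Aopt t.2.2 t.1).card))
    with hCdef
  have hT3card : T3.card = S * (A * H) := by
    simp [T3, Nat.card_Icc]
  have hsubset : T3 ⊆ P ∪ Amul ∪ C := by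
    intro t ht
    by_cases h1 : 0 < Δ t.2.2 t.1 t.2.1
    · exact Finset.mem_union_left _ (Finset.mem_union_left _
        (Finset.mem_filter.mpr ⟨ht, h1⟩))
    · have hz : Δ t.2.2 t.1 t.2.1 = 0 :=
        le_antisymm (not_lt.mp h1) (hΔ _ _ _).1
      by_cases h2 : 1 < (Aopt t.2.2 t.1).card
      · exact Finset.mem_union_left _ (Finset.mem_union_right _
          (Finset.mem_filter.mpr ⟨ht, hz, h2⟩))
      · exact Finset.mem_union_right _ (Finset.mem_filter.mpr ⟨ht, h1, h2⟩)
  have hcard_split : T3.card ≤ P.card + Amul.card + C.card :=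
    le_trans (Finset.card_le_card hsubset)
      (le_trans (Finset.card_union_le _ _)
        (by gcongr; exact Finset.card_union_le _ _))
  have hCcard : C.card ≤ S * H := by
    have h1 : C.card ≤ ((Finset.univ : Finset (Fin S)) ×ˢ Finset.Icc 1 H).card := by
      apply Finset.card_le_card_of_injOn (fun t => (t.1, t.2.2))
      · intro t ht
        have ht3 : t ∈ T3 := Finset.mem_filter.mp ht |>.1
        have : t.2.2 ∈ Finset.Icc 1 H := by
          simpa [T3, Finset.mem_product] using ht3
        simpa [Finset.mem_product] using this
      · intro t ht t' ht' heq
        obtain ⟨-, hnp, hc⟩ := Finset.mem_filter.mp ht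
        obtain ⟨-, hnp', hc'⟩ := Finset.mem_filter.mp ht'
        simp only [Prod.mk.injEq] at heq
        obtain ⟨hx, hh⟩ := heq
        have hz : Δ t.2.2 t.1 t.2.1 = 0 :=
          le_antisymm (not_lt.mp hnp) (hΔ _ _ _).1
        have hz' : Δ t'.2.2 t'.1 t'.2.1 = 0 :=
          le_antisymm (not_lt.mp hnp') (hΔ _ _ _).1
        have ha : t.2.1 ∈ Aopt t.2.2 t.1 := by
          simp [Aopt, hz]
        have ha' : t'.2.1 ∈ Aopt t.2.2 t.1 := by
          simp [Aopt, hx, hh, hz']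
        have hle1 : (Aopt t.2.2 t.1).card ≤ 1 := not_lt.mp hc
        have haa : t.2.1 = t'.2.1 := Finset.card_le_one.mp hle1 _ ha _ ha'
        exact Prod.ext hx (Prod.ext haa hh)
    simpa [Nat.card_Icc] using h1
  have hkey : (S : ℝ) * (A * H) ≤ (P.card : ℝ) + Amul.card + S * H := by
    have : (S * (A * H) : ℕ) ≤ P.card + Amul.card + S * H := by
      omega
    exact_mod_cast this
  -- sum bound
  have hsum : (P.card : ℝ) / H ≤ ∑ t ∈ P, 1 / Δ t.2.2 t.1 t.2.1 := by
    have hbd : ∀ t ∈ P, 1 / (H : ℝ) ≤ 1 / Δ t.2.2 t.1 t.2.1 := by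
      intro t ht
      have hp := (Finset.mem_filter.mp ht).2
      exact one_div_le_one_div_of_le hp (hΔ _ _ _).2
    calc (P.card : ℝ) / H = ∑ _t ∈ P, 1 / (H : ℝ) := by
          rw [Finset.sum_const, nsmul_eq_mul]; ring
      _ ≤ _ := Finset.sum_le_sum hbd
  have hmul : (Amul.card : ℝ) / H ≤ (Amul.card : ℝ) / Δmin := by
    gcongr
  have hfinal : (S : ℝ) * A / 2 ≤ (P.card : ℝ) / H + (Amul.card : ℝ) / H := by
    rw [← add_div, le_div_iff₀ hH0]
    have hA' : (2 : ℝ) ≤ A := by exact_mod_cast hA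
    have hS' : (0 : ℝ) ≤ S := Nat.cast_nonneg _
    nlinarith [mul_nonneg (mul_nonneg hS' hH0.le) (sub_nonneg.mpr hA')]
  calc (S : ℝ) * A / 2 ≤ (P.card : ℝ) / H + (Amul.card : ℝ) / H := hfinal
    _ ≤ _ := add_le_add hsum hmul
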